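/- For a union-closed family K of subsets of a finite set Q containing the empty set, the family Ǩ consisting of all members K of K such that there exists a tight path from ∅ to K in K is itself union-closed. -/
import Mathlib


variable {α : Type*} [DecidableEq α] [Fintype α]

/-- A family of subsets is union-closed. -/
def UnionClosed (K : Set (Finset α)) : Prop :=
  ∀ X ∈ K, ∀ Y ∈ K, X ∪ Y ∈ K

/-- There is a tight path in `K` from `S` to `T`: a chain of members of `K`
each obtained from the previous by adding exactly one element. -/
def TightPath (K : Set (Finset α)) (S T : Finset α) : Prop :=
  ∃ (k : ℕ) (Y : ℕ → Finset α), Y 0 = S ∧ Y k = T ∧ (∀ i ≤ k, Y i ∈ K) ∧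
    ∀ i < k, Y i ⊆ Y (i + 1) ∧ (Y (i + 1) \ Y i).card = 1

/-- The family of members of `K` reachable from `∅` by a tight path in `K`. -/
def checkFam (K : Set (Finset α)) : Set (Finset α) :=
  {X | X ∈ K ∧ TightPath K ∅ X}

/-- Accessibility: every nonempty member can lose some element and stay in the family. -/
def Accessible (K : Set (Finset α)) : Prop :=
  ∀ X ∈ K, X ≠ ∅ → ∃ x ∈ X, X.erase x ∈ K

/-- An antimatroid: contains `∅`, union-closed, and accessible. -/
def IsAntimatroid (K : Set (Finset α)) : Prop :=
  ∅ ∈ K ∧ UnionClosed K ∧ Accessible K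

theorem stmt0 (K : Set (Finset α)) (hempty : ∅ ∈ K) (hU : UnionClosed K) :
    UnionClosed (checkFam K) := by
  -- auxiliary: extend a tight path by one step
  have extend : ∀ S T : Finset α, TightPath K ∅ S → T ∈ K → S ⊆ T →
      (T \ S).card = 1 → TightPath K ∅ T := by
    rintro S T ⟨k, Y, h0, hk, hmem, hstep⟩ hT hsub hcard
    refine ⟨k + 1, fun i => if i ≤ k then Y i else T, by simp [h0], by simp, ?_, ?_⟩
    · intro i hi
      by_cases h : i ≤ k
      · simpa [h] using hmem i h
      · simpa [h] using hT
    · intro i hi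
      by_cases h : i < k
      · have h1 : i ≤ k := le_of_lt h
        have h2 : i + 1 ≤ k := h
        simpa [h1, h2] using hstep i h
      · have hik : i = k := by omega
        subst hik
        simp only [le_refl, if_pos, Nat.not_succ_le_self, if_neg, hk]
        exact ⟨hsub, hcard⟩
  -- main induction
  have aux : ∀ (k : ℕ) (P : ℕ → Finset α), P 0 = ∅ → (∀ i ≤ k, P i ∈ K) →
      (∀ i < k, P i ⊆ P (i + 1) ∧ (P (i + 1) \ P i).card = 1) →
      ∀ X ∈ checkFam K, X ∪ P k ∈ checkFam K := by
    intro k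
    induction k with
    | zero =>
      intro P h0 _ _ X hX
      simpa [h0] using hX
    | succ k ih =>
      intro P h0 hmem hstep X hX
      have hIH : X ∪ P k ∈ checkFam K :=
        ih P h0 (fun i hi => hmem i (by omega)) (fun i hi => hstep i (by omega)) X hX
      obtain ⟨hstep1, hstep2⟩ := hstep k (by omega)
      by_cases hsub : P (k + 1) ⊆ X ∪ P k
      · have : X ∪ P (k + 1) = X ∪ P k := by
          apply Finset.Subset.antisymm
          · exact Finset.union_subset (Finset.subset_union_left) hsub
          · exact Finset.union_subset_union_right hstep1
        rw [this]; exact hIH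
      · have hXK : X ∈ K := hX.1
        have hPK : P (k + 1) ∈ K := hmem (k + 1) (le_refl _)
        have hUK : X ∪ P (k + 1) ∈ K := hU X hXK (P (k + 1)) hPK
        have hsub2 : X ∪ P k ⊆ X ∪ P (k + 1) := Finset.union_subset_union_right hstep1
        have hdsub : (X ∪ P (k + 1)) \ (X ∪ P k) ⊆ P (k + 1) \ P k := by
          intro a ha
          simp only [Finset.mem_sdiff, Finset.mem_union, not_or] at ha ⊢
          tauto
        have hne : ((X ∪ P (k + 1)) \ (X ∪ P k)).Nonempty := by
          obtain ⟨a, ha, hna⟩ := Finset.not_subset.mp hsub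
          exact ⟨a, by simp_all [Finset.mem_sdiff]⟩
        have hcard : ((X ∪ P (k + 1)) \ (X ∪ P k)).card = 1 := by
          have h1 := Finset.card_le_card hdsub
          have h2 := Finset.card_pos.mpr hne
          omega
        exact ⟨hUK, extend _ _ hIH.2 hUK hsub2 hcard⟩
  intro X hX Y hY
  obtain ⟨hYK, k, P, h0, hk, hmem, hstep⟩ := hY
  have := aux k P h0 hmem hstep X hX
  rwa [hk] at this
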